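/- For every prime p ≥ 5, the numerator of the harmonic sum H_{p−1} = 1 + 1/2 + ... + 1/(p−1) is divisible by p². -/
import Mathlib

open Finset

/-- Sum of squares of inverses over `ZMod p` vanishes for `p ≥ 5`. -/
private lemma wol_aux1 (p : ℕ) (hp : p.Prime) (h5 : 5 ≤ p) :
    ∑ i ∈ Finset.Ico 1 p, ((i : ZMod p)⁻¹) ^ 2 = 0 := by
  haveI : Fact p.Prime := ⟨hp⟩
  have h0 : ∑ i ∈ Finset.range p, ((i : ZMod p)⁻¹) ^ 2
      = ∑ i ∈ Finset.Ico 1 p, ((i : ZMod p)⁻¹) ^ 2 := by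
    rw [Finset.range_eq_Ico, Finset.sum_eq_sum_Ico_succ_bot (by omega : 0 < p)]
    simp
  rw [← h0]
  have h1 : ∑ i ∈ Finset.range p, ((i : ZMod p)⁻¹) ^ 2 = ∑ x : ZMod p, (x⁻¹) ^ 2 := by
    refine Finset.sum_nbij' (g := fun x : ZMod p => x⁻¹ ^ 2)
      (fun i => (i : ZMod p)) (fun x : ZMod p => x.val) ?_ ?_ ?_ ?_ ?_
    · intro a _; exact Finset.mem_univ _
    · intro a _
      exact Finset.mem_range.2 (ZMod.val_lt a)
    · intro a ha
      exact ZMod.val_natCast_of_lt (Finset.mem_range.1 ha)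
    · intro a _
      exact ZMod.natCast_zmod_val a
    · intro a _; rfl
  rw [h1]
  have h2 : ∑ x : ZMod p, (x⁻¹) ^ 2 = ∑ x : ZMod p, x ^ 2 :=
    Equiv.sum_comp (Equiv.inv (ZMod p)) (fun x => x ^ 2)
  rw [h2]
  apply FiniteField.sum_pow_lt_card_sub_one
  rw [ZMod.card]
  omega

/-- Wolstenholme in `ZMod (p^2)`: the sum of inverses of `1, ..., p-1` vanishes. -/
private lemma wol_aux2 (p : ℕ) (hp : p.Prime) (h5 : 5 ≤ p) :
    ∑ i ∈ Finset.Ico 1 p, ((i : ZMod (p ^ 2)))⁻¹ = 0 := by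
  haveI : Fact p.Prime := ⟨hp⟩
  haveI : NeZero (p ^ 2) := ⟨by positivity⟩
  set R := ZMod (p ^ 2)
  have hcop : ∀ i ∈ Finset.Ico 1 p, IsUnit ((i : ℕ) : R) := by
    intro i hi
    rw [Finset.mem_Ico] at hi
    rw [ZMod.isUnit_iff_coprime]
    apply Nat.Coprime.pow_right
    rw [Nat.coprime_comm]
    exact (hp.coprime_iff_not_dvd).2 (fun h => absurd (Nat.le_of_dvd (by omega) h) (by omega))
  set S := ∑ i ∈ Finset.Ico 1 p, ((i : ℕ) : R)⁻¹ with hS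
  have hpp : (p : R) * (p : R) = 0 := by
    have : ((p ^ 2 : ℕ) : R) = 0 := ZMod.natCast_self _
    push_cast at this
    linear_combination this
  -- reindex by i ↦ p - i
  have hre : S = ∑ i ∈ Finset.Ico 1 p, (((p - i : ℕ) : R))⁻¹ := by
    rw [hS]
    apply Finset.sum_nbij' (fun i => p - i) (fun i => p - i)
    · intro a ha; rw [Finset.mem_Ico] at *; omega
    · intro a ha; rw [Finset.mem_Ico] at *; omega
    · intro a ha; rw [Finset.mem_Ico] at ha; omega
    · intro a ha; rw [Finset.mem_Ico] at ha; omega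
    · intro a ha; rw [Finset.mem_Ico] at ha
      congr 2
      omega
  -- the key term computation
  have hterm : ∀ i ∈ Finset.Ico 1 p,
      ((i : ℕ) : R)⁻¹ + (((p - i : ℕ) : R))⁻¹ = -((p : R) * (((i : ℕ) : R)⁻¹) ^ 2) := by
    intro i hi
    have hi' := Finset.mem_Ico.1 hi
    have hu : IsUnit ((i : ℕ) : R) := hcop i hi
    have hv : IsUnit (((p - i : ℕ) : R)) := hcop (p - i) (Finset.mem_Ico.2 ⟨by omega, by omega⟩)
    set u : R := ((i : ℕ) : R)
    set v : R := (((p - i : ℕ) : R))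
    have huv : u + v = (p : R) := by
      rw [← Nat.cast_add]
      congr 1
      omega
    have hpv : (p : R) * v = -((p : R) * u) := by
      have : v = (p : R) - u := by rw [← huv]; ring
      rw [this]
      rw [mul_sub, hpp]
      ring
    have huu : u * u⁻¹ = 1 := ZMod.mul_inv_of_unit u hu
    have hvv : v * v⁻¹ = 1 := ZMod.mul_inv_of_unit v hv
    have step1 : u⁻¹ + v⁻¹ = (p : R) * u⁻¹ * v⁻¹ := by
      have : u⁻¹ + v⁻¹ = (u + v) * u⁻¹ * v⁻¹ := by
        have : (u + v) * u⁻¹ * v⁻¹ = (u * u⁻¹) * v⁻¹ + (v * v⁻¹) * u⁻¹ := by ring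
        rw [this, huu, hvv]
        ring
      rw [this, huv]
    have step2 : (p : R) * v⁻¹ = -((p : R) * u⁻¹) := by
      apply hv.mul_right_cancel
      rw [mul_assoc, ZMod.inv_mul_of_unit v hv, mul_one]
      linear_combination u⁻¹ * hpv - (p : R) * huu
    calc u⁻¹ + v⁻¹ = ((p : R) * v⁻¹) * u⁻¹ := by rw [step1]; ring
    _ = -((p : R) * u⁻¹) * u⁻¹ := by rw [step2]
    _ = -((p : R) * (u⁻¹) ^ 2) := by ring
  have h2S : (2 : R) * S = -((p : R) * ∑ i ∈ Finset.Ico 1 p, (((i : ℕ) : R)⁻¹) ^ 2) := by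
    rw [two_mul]
    nth_rewrite 2 [hre]
    rw [← Finset.sum_add_distrib, Finset.sum_congr rfl hterm, Finset.mul_sum, ← Finset.sum_neg_distrib]
  -- p * T = 0 since T ≡ 0 mod p
  set T : R := ∑ i ∈ Finset.Ico 1 p, (((i : ℕ) : R)⁻¹) ^ 2 with hT
  have hφ : (ZMod.castHom (dvd_pow_self p two_ne_zero) (ZMod p)) T = 0 := by
    rw [hT, map_sum]
    rw [← wol_aux1 p hp h5]
    apply Finset.sum_congr rfl
    intro i hi
    rw [map_pow]
    congr 1
    have hu := hcop i hi
    have : (ZMod.castHom (dvd_pow_self p two_ne_zero) (ZMod p)) (((i : ℕ) : R)) = ((i : ℕ) : ZMod p) :=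
      map_natCast _ i
    have h1 : ((i : ℕ) : ZMod p) * (ZMod.castHom (dvd_pow_self p two_ne_zero) (ZMod p)) (((i : ℕ) : R)⁻¹) = 1 := by
      rw [← this, ← map_mul, ZMod.mul_inv_of_unit _ hu, map_one]
    exact (inv_eq_of_mul_eq_one_right h1).symm
  have hpT : (p : R) * T = 0 := by
    have hval : ((T.val : ℕ) : R) = T := ZMod.natCast_zmod_val T
    have hv0 : ((T.val : ℕ) : ZMod p) = 0 := by
      rw [← map_natCast (ZMod.castHom (dvd_pow_self p two_ne_zero) (ZMod p)) T.val, hval, hφ]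
    obtain ⟨k, hk⟩ := (ZMod.natCast_eq_zero_iff _ _).1 hv0
    calc (p : R) * T = ((p : ℕ) : R) * ((T.val : ℕ) : R) := by rw [hval]
    _ = (((p * T.val : ℕ)) : R) := (Nat.cast_mul _ _).symm
    _ = (((p ^ 2 * k : ℕ)) : R) := by rw [hk]; ring_nf
    _ = 0 := by rw [Nat.cast_mul, ZMod.natCast_self, zero_mul]
  have h2S0 : (2 : R) * S = 0 := by rw [h2S, hpT, neg_zero]
  have h2u : IsUnit (2 : R) := by
    have : ((2 : ℕ) : R) = (2 : R) := by norm_num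
    rw [← this, ZMod.isUnit_iff_coprime]
    exact Odd.coprime_two_left (Odd.pow (hp.odd_of_ne_two (by omega)))
  calc S = ((2 : R)⁻¹ * 2) * S := by rw [ZMod.inv_mul_of_unit _ h2u, one_mul]
  _ = (2 : R)⁻¹ * (2 * S) := by ring
  _ = 0 := by rw [h2S0, mul_zero]

theorem wolstenholme_harmonic (p : ℕ) (hp : p.Prime) (h5 : 5 ≤ p) :
    (p : ℤ) ^ 2 ∣ (∑ i ∈ Finset.range (p - 1), (1 : ℚ) / (i + 1)).num := by
  haveI : Fact p.Prime := ⟨hp⟩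
  haveI : NeZero (p ^ 2) := ⟨by positivity⟩
  set F : ℕ := (p - 1).factorial with hF
  set A : ℕ := ∑ i ∈ Finset.range (p - 1), F / (i + 1) with hA
  have hdvd : ∀ i ∈ Finset.range (p - 1), (i + 1) ∣ F := by
    intro i hi
    exact Nat.dvd_factorial (Nat.succ_pos i) (Nat.succ_le_of_lt (Finset.mem_range.1 hi))
  -- p^2 ∣ A
  have hAdvd : (p ^ 2 : ℕ) ∣ A := by
    rw [← ZMod.natCast_eq_zero_iff]
    rw [hA]
    push_cast [Nat.cast_sum]
    have : ∑ i ∈ Finset.range (p - 1), ((F / (i + 1) : ℕ) : ZMod (p ^ 2))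
        = ∑ i ∈ Finset.range (p - 1), (F : ZMod (p ^ 2)) * (((i + 1 : ℕ) : ZMod (p ^ 2)))⁻¹ := by
      apply Finset.sum_congr rfl
      intro i hi
      have hip : i + 1 < p := by have := Finset.mem_range.1 hi; omega
      have hu : IsUnit (((i + 1 : ℕ)) : ZMod (p ^ 2)) := by
        rw [ZMod.isUnit_iff_coprime]
        apply Nat.Coprime.pow_right
        rw [Nat.coprime_comm]
        exact (hp.coprime_iff_not_dvd).2
          (fun h => absurd (Nat.le_of_dvd (by omega) h) (by omega))
      have hmul : (F / (i + 1)) * (i + 1) = F := Nat.div_mul_cancel (hdvd i hi)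
      have hc : ((F / (i + 1) : ℕ) : ZMod (p ^ 2)) * ((i + 1 : ℕ) : ZMod (p ^ 2))
          = (F : ZMod (p ^ 2)) := by rw [← Nat.cast_mul, hmul]
      calc ((F / (i + 1) : ℕ) : ZMod (p ^ 2))
          = ((F / (i + 1) : ℕ) : ZMod (p ^ 2)) * (((i + 1 : ℕ) : ZMod (p ^ 2)) * (((i + 1 : ℕ) : ZMod (p ^ 2)))⁻¹) := by
            rw [ZMod.mul_inv_of_unit _ hu, mul_one]
        _ = (F : ZMod (p ^ 2)) * (((i + 1 : ℕ) : ZMod (p ^ 2)))⁻¹ := by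
            rw [← mul_assoc, hc]
    rw [this, ← Finset.mul_sum]
    have hre : ∑ i ∈ Finset.range (p - 1), (((i + 1 : ℕ)) : ZMod (p ^ 2))⁻¹
        = ∑ i ∈ Finset.Ico 1 p, ((i : ℕ) : ZMod (p ^ 2))⁻¹ := by
      rw [Finset.sum_Ico_eq_sum_range]
      apply Finset.sum_congr (by congr 1) 
      intro i _
      rw [Nat.add_comm]
    rw [hre, wol_aux2 p hp h5, mul_zero]
  -- now the rational bookkeeping
  set q : ℚ := ∑ i ∈ Finset.range (p - 1), (1 : ℚ) / (i + 1) with hq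
  have hF0 : (F : ℚ) ≠ 0 := Nat.cast_ne_zero.2 (Nat.factorial_ne_zero _)
  have hqF : q * (F : ℚ) = (A : ℚ) := by
    rw [hq, hA, Nat.cast_sum, Finset.sum_mul]
    apply Finset.sum_congr rfl
    intro i hi
    rw [Nat.cast_div (hdvd i hi) (by exact_mod_cast Nat.succ_ne_zero i)]
    push_cast
    ring
  have hd0 : ((q.den : ℚ)) ≠ 0 := Nat.cast_ne_zero.2 q.den_nz
  have hnum : (q.num : ℚ) = q * (q.den : ℚ) := by
    have h := Rat.num_div_den q
    rw [div_eq_iff hd0] at h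
    exact h
  have keyQ : ((q.num * (F : ℤ) : ℤ) : ℚ) = (((A : ℤ) * (q.den : ℤ) : ℤ) : ℚ) := by
    push_cast
    rw [hnum]
    calc q * (q.den : ℚ) * (F : ℚ) = (q * (F : ℚ)) * (q.den : ℚ) := by ring
    _ = (A : ℚ) * (q.den : ℚ) := by rw [hqF]
  have key : q.num * (F : ℤ) = (A : ℤ) * (q.den : ℤ) := by exact_mod_cast keyQ
  have hAdvdZ : (p : ℤ) ^ 2 ∣ (A : ℤ) := by
    have := Int.natCast_dvd_natCast.2 hAdvd
    push_cast at this
    exact this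
  have hdvdnumF : (p : ℤ) ^ 2 ∣ q.num * (F : ℤ) := by
    rw [key]
    exact hAdvdZ.mul_right _
  have hcopF : IsCoprime ((p : ℤ) ^ 2) (F : ℤ) := by
    apply IsCoprime.pow_left
    rw [Int.isCoprime_iff_gcd_eq_one, Int.gcd_natCast_natCast]
    exact (hp.coprime_iff_not_dvd).2 (by
      rw [hp.dvd_factorial]
      omega)
  exact hcopF.dvd_of_dvd_mul_right hdvdnumF
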